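/- Let P, Q be binary-input DMCs with finite output alphabets whose conditional output distributions P_0, P_1 and Q_0, Q_1 each have a common support point, let p_min be the smallest nonzero transition probability among P and Q, and let s* ∈ [0,1/2] be a maximizer of E_s satisfying d_C(P_0,P_1,s*) ≥ d_C(P_0,P_1,1−s*) and d_C(Q_0,Q_1,s*) ≥ d_C(Q_0,Q_1,1−s*). Fix a deterministic n-step 2-hop protocol with encoder codewords x⃗_0, x⃗_1 ∈ {0,1}^n, and suppose the functions s ↦ d_C(x⃗_0, x⃗_1, P^n, s) and s ↦ d_C(P_0,P_1,s) are non-constant, concave with unique maximizers, and of weakly opposite type with respect to s*. Then −log(p_{e,0} + p_{e,1}) ≤ n·d_C(P_0,P_1,s*) + √(2n)·log(1/p_min) + log 4. -/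

import Mathlib

open scoped BigOperators
open Finset

noncomputable section

/-- A probability mass function on a finite type, given as a real-valued function. -/
def IsPMF {α : Type*} [Fintype α] (p : α → ℝ) : Prop :=
  (∀ x, 0 ≤ p x) ∧ ∑ x, p x = 1

/-- A discrete memoryless channel: every input symbol yields a PMF on outputs. -/
def IsChannel {X Y : Type*} [Fintype Y] (P : X → Y → ℝ) : Prop :=
  ∀ x, IsPMF (P x)

/-- The Chernoff sum `Σ_x p(x)^{1-s} q(x)^s`, with terms where `p` or `q` vanish removed;
this realizes the continuous extension to the endpoints `s ∈ {0,1}`. -/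
def cherSum {α : Type*} [Fintype α] (p q : α → ℝ) (s : ℝ) : ℝ :=
  ∑ x, if p x = 0 ∨ q x = 0 then 0 else p x ^ (1 - s) * q x ^ s

/-- The Chernoff divergence `d_C(p, q, s)`. -/
def dC {α : Type*} [Fintype α] (p q : α → ℝ) (s : ℝ) : ℝ :=
  - Real.log (cherSum p q s)

/-- First derivative of the Chernoff divergence with respect to `s`. -/
def dC' {α : Type*} [Fintype α] (p q : α → ℝ) (s : ℝ) : ℝ :=
  deriv (dC p q) s

/-- Second derivative of the Chernoff divergence with respect to `s`. -/
def dC'' {α : Type*} [Fintype α] (p q : α → ℝ) (s : ℝ) : ℝ :=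
  deriv (deriv (dC p q)) s

/-- The tilted distribution `Q_s`. -/
def tilted {α : Type*} [Fintype α] (p q : α → ℝ) (s : ℝ) (x : α) : ℝ :=
  (if p x = 0 ∨ q x = 0 then 0 else p x ^ (1 - s) * q x ^ s) / cherSum p q s

/-- Kullback–Leibler divergence (natural log), with the convention `0 log 0 = 0`. -/
def KLdiv {α : Type*} [Fintype α] (p q : α → ℝ) : ℝ :=
  ∑ x, if p x = 0 then 0 else p x * Real.log (p x / q x)

/-- Product (memoryless) output distribution of a channel given an input string. -/
def prodDist {X Y : Type*} [Fintype Y] {n : ℕ} (P : X → Y → ℝ) (w : Fin n → X) :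
    (Fin n → Y) → ℝ :=
  fun y => ∏ i, P (w i) (y i)

/-- Two distributions have a common support point. -/
def CommonSupport {α : Type*} (p q : α → ℝ) : Prop :=
  ∃ x, p x ≠ 0 ∧ q x ≠ 0

/-- `pmin` is the smallest nonzero transition probability of the channel `Q`. -/
def MinTransChan {X Y : Type*} (Q : X → Y → ℝ) (pmin : ℝ) : Prop :=
  0 < pmin ∧ (∃ x y, Q x y = pmin) ∧ ∀ x y, Q x y ≠ 0 → pmin ≤ Q x y

/-- `pmin` is the smallest nonzero transition probability among the channels `P` and `Q`. -/
def MinTransPair {Y Z : Type*} (P : Bool → Y → ℝ) (Q : Bool → Z → ℝ) (pmin : ℝ) : Prop :=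
  0 < pmin ∧ ((∃ b y, P b y = pmin) ∨ (∃ b z, Q b z = pmin)) ∧
    (∀ b y, P b y ≠ 0 → pmin ≤ P b y) ∧ ∀ b z, Q b z ≠ 0 → pmin ≤ Q b z

/-- `pmin` is the smallest nonzero probability among the values of two distributions. -/
def MinProbPair {α : Type*} (p q : α → ℝ) (pmin : ℝ) : Prop :=
  0 < pmin ∧ ((∃ x, p x = pmin) ∨ (∃ x, q x = pmin)) ∧
    (∀ x, p x ≠ 0 → pmin ≤ p x) ∧ ∀ x, q x ≠ 0 → pmin ≤ q x

/-- A deterministic `n`-step 2-hop protocol: codewords `x false = x⃗₀`, `x true = x⃗₁`,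
relay maps (the `i`-th transmission may depend only on the previously received symbols),
and a decoder. -/
structure DetProtocol (Y Z : Type*) (n : ℕ) where
  x : Bool → Fin n → Bool
  relay : (i : Fin n) → (Fin i → Y) → Bool
  dec : (Fin n → Z) → Bool

/-- The relay transmissions `W_1, …, W_n` determined by the received sequence `y`. -/
def DetProtocol.W {Y Z : Type*} {n : ℕ} (π : DetProtocol Y Z n) (y : Fin n → Y)
    (i : Fin n) : Bool :=
  π.relay i (fun j => y (Fin.castLE i.isLt.le j))

/-- `errProb P Q π b` is the conditional error probability `ℙ(Θ̂ = ¬b ∣ Θ = b)`. -/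
def errProb {Y Z : Type*} [Fintype Y] [Fintype Z] {n : ℕ}
    (P : Bool → Y → ℝ) (Q : Bool → Z → ℝ) (π : DetProtocol Y Z n) (b : Bool) : ℝ :=
  ∑ y : Fin n → Y, ∑ z : Fin n → Z,
    prodDist P (π.x b) y * prodDist Q (π.W y) z *
      (if π.dec z = !b then 1 else 0)

/-- Probability (given `Θ = b`) that the relay receives the prefix `ypre` in the
first `k` time steps. -/
def prefixProb {Y Z : Type*} [Fintype Y] {n : ℕ} (P : Bool → Y → ℝ)
    (π : DetProtocol Y Z n) (b : Bool) {k : ℕ} (hk : k ≤ n) (ypre : Fin k → Y) : ℝ :=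
  ∏ i : Fin k, P (π.x b (Fin.castLE hk i)) (ypre i)

/-- `errGiven P Q π b hk ypre` is the conditional error probability `p_{e,b}(y_{1…k})`:
the probability that `Θ̂ = ¬b` given `Θ = b` and that the relay receives `ypre` in the
first `k` time steps. -/
def errGiven {Y Z : Type*} [Fintype Y] [Fintype Z] {n : ℕ}
    (P : Bool → Y → ℝ) (Q : Bool → Z → ℝ) (π : DetProtocol Y Z n) (b : Bool)
    {k : ℕ} (hk : k ≤ n) (ypre : Fin k → Y) : ℝ :=
  (∑ y : Fin n → Y, ∑ z : Fin n → Z,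
      Set.indicator {y' : Fin n → Y | ∀ i : Fin k, y' (Fin.castLE hk i) = ypre i}
          (fun _ => (1 : ℝ)) y *
        prodDist P (π.x b) y * prodDist Q (π.W y) z *
        (if π.dec z = !b then 1 else 0)) /
    prefixProb P π b hk ypre

/-- The first `k` relay transmissions `w⃗(y_{1…k})`, determined by the first `k`
received symbols. -/
def relayPrefix {Y Z : Type*} {n : ℕ} (π : DetProtocol Y Z n) {k : ℕ} (hk : k ≤ n)
    (ypre : Fin k → Y) (i : Fin k) : Bool :=
  π.relay (Fin.castLE hk i) (fun j => ypre (Fin.castLE i.isLt.le j))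

/-- Probability that the decoder outputs `b` when the relay input string is `w`. -/
def decProb {Z : Type*} [Fintype Z] {n : ℕ} (Q : Bool → Z → ℝ)
    (dec : (Fin n → Z) → Bool) (b : Bool) (w : Fin n → Bool) : ℝ :=
  ∑ z : Fin n → Z, prodDist Q w z * (if dec z = b then 1 else 0)

/-- `w` extends the relay's first `k` transmissions (after receiving `ypre`) to length `n`,
minimizing the probability that the decoder outputs `b`, i.e. `w = w⃗_{1-b}(y_{1…k})`. -/
def IsBestExtension {Y Z : Type*} [Fintype Z] {n : ℕ} (Q : Bool → Z → ℝ)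
    (π : DetProtocol Y Z n) (b : Bool) {k : ℕ} (hk : k ≤ n) (ypre : Fin k → Y)
    (w : Fin n → Bool) : Prop :=
  (∀ i : Fin k, w (Fin.castLE hk i) = relayPrefix π hk ypre i) ∧
    ∀ w' : Fin n → Bool,
      (∀ i : Fin k, w' (Fin.castLE hk i) = relayPrefix π hk ypre i) →
        decProb Q π.dec b w ≤ decProb Q π.dec b w'

/-- A randomized `n`-step 2-hop protocol: a finite collection of deterministic
protocols together with a probability distribution (the shared private randomness). -/
structure RandProtocol (Y Z : Type*) (n : ℕ) where
  m : ℕ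
  ρ : Fin m → ℝ
  det : Fin m → DetProtocol Y Z n

/-- Validity of the randomness distribution of a randomized protocol. -/
def RandProtocol.Valid {Y Z : Type*} {n : ℕ} (π : RandProtocol Y Z n) : Prop :=
  (∀ r, 0 ≤ π.ρ r) ∧ ∑ r, π.ρ r = 1

/-- Overall error probability `ℙ(Θ̂ ≠ Θ)` of a randomized protocol, with `Θ` uniform. -/
def randPe {Y Z : Type*} [Fintype Y] [Fintype Z] {n : ℕ}
    (P : Bool → Y → ℝ) (Q : Bool → Z → ℝ) (π : RandProtocol Y Z n) : ℝ :=
  ∑ r, π.ρ r * ((errProb P Q (π.det r) false + errProb P Q (π.det r) true) / 2)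

/-- The 2-hop error exponent `E(P,Q)`: the supremum, over sequences of (randomized)
protocols, of the liminf of `-(1/n) log P_e(n,P,Q)`. -/
def twoHopExponent {Y Z : Type*} [Fintype Y] [Fintype Z]
    (P : Bool → Y → ℝ) (Q : Bool → Z → ℝ) : ℝ :=
  sSup { E | ∃ π : (n : ℕ) → RandProtocol Y Z n, (∀ n, (π n).Valid) ∧
    E = Filter.liminf (fun n : ℕ => -(1 / (n : ℝ)) * Real.log (randPe P Q (π n)))
          Filter.atTop }

/-- `m` is the unique global maximizer of `g` on `[0,1]`. -/
def UniqueArgmax (g : ℝ → ℝ) (m : ℝ) : Prop :=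
  m ∈ Set.Icc (0 : ℝ) 1 ∧ ∀ s ∈ Set.Icc (0 : ℝ) 1, s ≠ m → g s < g m

/-- `g` is skewed with respect to `s*`. -/
def SkewedFun (sStar : ℝ) (g : ℝ → ℝ) : Prop :=
  ∃ m, UniqueArgmax g m ∧ (m < sStar ∨ 1 - sStar < m)

/-- `g` is balanced with respect to `s*`. -/
def BalancedFun (sStar : ℝ) (g : ℝ → ℝ) : Prop :=
  ∃ m, UniqueArgmax g m ∧ sStar < m ∧ m < 1 - sStar

/-- `g` is neutral with respect to `s*`. -/
def NeutralFun (sStar : ℝ) (g : ℝ → ℝ) : Prop :=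
  ∃ m, UniqueArgmax g m ∧ (m = sStar ∨ m = 1 - sStar)

/-- `g` and `h` are of strictly opposite type w.r.t. `s*`. -/
def StrictlyOppositeType (sStar : ℝ) (g h : ℝ → ℝ) : Prop :=
  (SkewedFun sStar g ∧ BalancedFun sStar h) ∨ (BalancedFun sStar g ∧ SkewedFun sStar h)

/-- `g` and `h` are of weakly opposite type w.r.t. `s*`. -/
def WeaklyOppositeType (sStar : ℝ) (g h : ℝ → ℝ) : Prop :=
  ((SkewedFun sStar g ∨ NeutralFun sStar g) ∧ (BalancedFun sStar h ∨ NeutralFun sStar h)) ∨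
    ((BalancedFun sStar g ∨ NeutralFun sStar g) ∧ (SkewedFun sStar h ∨ NeutralFun sStar h))

/-- `g` is non-constant on `[0,1]`. -/
def NonConstantOn (g : ℝ → ℝ) : Prop :=
  ∃ s₁ ∈ Set.Icc (0 : ℝ) 1, ∃ s₂ ∈ Set.Icc (0 : ℝ) 1, g s₁ ≠ g s₂

/-- The quantity `E_s` from the paper. -/
def Efun {Y Z : Type*} [Fintype Y] [Fintype Z]
    (P : Bool → Y → ℝ) (Q : Bool → Z → ℝ) (s : ℝ) : ℝ :=
  min (max (dC (P false) (P true) s) (dC (P false) (P true) (1 - s)))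
      (max (dC (Q false) (Q true) s) (dC (Q false) (Q true) (1 - s)))


lemma pmf_le_one {α : Type*} [Fintype α] {p : α → ℝ} (hp : IsPMF p) (x : α) : p x ≤ 1 := by
  have := Finset.single_le_sum (f := p) (fun i _ => hp.1 i) (Finset.mem_univ x)
  simpa [hp.2] using this

lemma cherT_nonneg {α : Type*} [Fintype α] {p q : α → ℝ} (hp : ∀ x, 0 ≤ p x)
    (hq : ∀ x, 0 ≤ q x) (s : ℝ) (x : α) :
    0 ≤ (if p x = 0 ∨ q x = 0 then 0 else p x ^ (1 - s) * q x ^ s) := by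
  split
  · exact le_refl 0
  · exact mul_nonneg (Real.rpow_nonneg (hp x) _) (Real.rpow_nonneg (hq x) _)

lemma cherSum_pos {α : Type*} [Fintype α] {p q : α → ℝ} (hp : ∀ x, 0 ≤ p x)
    (hq : ∀ x, 0 ≤ q x) (hsupp : CommonSupport p q) (s : ℝ) : 0 < cherSum p q s := by
  obtain ⟨x₀, hx₀p, hx₀q⟩ := hsupp
  refine Finset.sum_pos' (fun x _ => cherT_nonneg hp hq s x) ⟨x₀, Finset.mem_univ _, ?_⟩
  rw [if_neg (by tauto)]
  exact mul_pos (Real.rpow_pos_of_pos (lt_of_le_of_ne (hp x₀) (Ne.symm hx₀p)) _)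
    (Real.rpow_pos_of_pos (lt_of_le_of_ne (hq x₀) (Ne.symm hx₀q)) _)

lemma cherSum_le_one {α : Type*} [Fintype α] {p q : α → ℝ} (hp : IsPMF p) (hq : IsPMF q)
    {s : ℝ} (hs : s ∈ Set.Icc (0:ℝ) 1) : cherSum p q s ≤ 1 := by
  have key : ∀ x, (if p x = 0 ∨ q x = 0 then 0 else p x ^ (1 - s) * q x ^ s)
      ≤ (1 - s) * p x + s * q x := by
    intro x
    split
    · have := hp.1 x; have := hq.1 x; have := hs.1; have := hs.2; nlinarith
    · exact Real.geom_mean_le_arith_mean2_weighted (by linarith [hs.2]) hs.1 (hp.1 x) (hq.1 x)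
        (by ring)
  unfold cherSum
  calc _ ≤ ∑ x, ((1 - s) * p x + s * q x) := Finset.sum_le_sum fun x _ => key x
    _ = 1 := by rw [Finset.sum_add_distrib, ← Finset.mul_sum, ← Finset.mul_sum, hp.2, hq.2]; ring

lemma dC_nonneg {α : Type*} [Fintype α] {p q : α → ℝ} (hp : IsPMF p) (hq : IsPMF q)
    {s : ℝ} (hs : s ∈ Set.Icc (0:ℝ) 1) : 0 ≤ dC p q s := by
  have h1 : (0:ℝ) ≤ cherSum p q s :=
    Finset.sum_nonneg fun x _ => cherT_nonneg hp.1 hq.1 s x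
  have := Real.log_nonpos h1 (cherSum_le_one hp hq hs)
  unfold dC; linarith

lemma cherSum_refl {α : Type*} [Fintype α] {p : α → ℝ} (hp : IsPMF p) (s : ℝ) :
    cherSum p p s = 1 := by
  have : ∀ x, (if p x = 0 ∨ p x = 0 then 0 else p x ^ (1 - s) * p x ^ s) = p x := by
    intro x
    by_cases h : p x = 0
    · simp [h]
    · rw [if_neg (by tauto), ← Real.rpow_add (lt_of_le_of_ne (hp.1 x) (Ne.symm h))]
      norm_num
  rw [cherSum]
  simp_rw [this]
  exact hp.2

lemma cherSum_comm {α : Type*} [Fintype α] (p q : α → ℝ) (s : ℝ) :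
    cherSum q p s = cherSum p q (1 - s) := by
  unfold cherSum
  refine Finset.sum_congr rfl fun x _ => ?_
  by_cases h : p x = 0 ∨ q x = 0
  · rw [if_pos (by tauto), if_pos h]
  · rw [if_neg (by tauto), if_neg h, mul_comm]
    norm_num

lemma prodDist_nonneg {X Y : Type*} [Fintype Y] {n : ℕ} {P : X → Y → ℝ}
    (hP : ∀ x y, 0 ≤ P x y) (w : Fin n → X) (y : Fin n → Y) : 0 ≤ prodDist P w y :=
  Finset.prod_nonneg fun i _ => hP _ _

lemma prodDist_sum_one {X Y : Type*} [Fintype Y] {n : ℕ} {P : X → Y → ℝ}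
    (hP : ∀ x, (∀ y, 0 ≤ P x y) ∧ ∑ y, P x y = 1) (w : Fin n → X) :
    ∑ y : Fin n → Y, prodDist P w y = 1 := by
  rw [show (∑ y : Fin n → Y, prodDist P w y) = ∏ i, ∑ v, P (w i) v from
    (Fintype.prod_sum (fun i v => P (w i) v)).symm ▸ rfl]
  · simp [(fun i => (hP (w i)).2)]

lemma cherT_prod {Y : Type*} [Fintype Y] {n : ℕ} (P : Bool → Y → ℝ)
    (hP : ∀ b v, 0 ≤ P b v) (x0 x1 : Fin n → Bool) (s : ℝ) (y : Fin n → Y) :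
    (if prodDist P x0 y = 0 ∨ prodDist P x1 y = 0 then 0
      else prodDist P x0 y ^ (1 - s) * prodDist P x1 y ^ s) =
    ∏ i, (if P (x0 i) (y i) = 0 ∨ P (x1 i) (y i) = 0 then 0
      else P (x0 i) (y i) ^ (1 - s) * P (x1 i) (y i) ^ s) := by
  by_cases h : ∃ i, P (x0 i) (y i) = 0 ∨ P (x1 i) (y i) = 0
  · obtain ⟨i, hi⟩ := h
    have hz : prodDist P x0 y = 0 ∨ prodDist P x1 y = 0 := by
      rcases hi with hi | hi
      · exact Or.inl (Finset.prod_eq_zero (Finset.mem_univ i) hi)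
      · exact Or.inr (Finset.prod_eq_zero (Finset.mem_univ i) hi)
    rw [if_pos hz]
    refine (Finset.prod_eq_zero (Finset.mem_univ i) ?_).symm
    exact if_pos hi
  · push_neg at h
    have h0 : prodDist P x0 y ≠ 0 := by
      show (∏ i, P (x0 i) (y i)) ≠ 0
      exact Finset.prod_ne_zero_iff.mpr fun i _ => (h i).1
    have h1 : prodDist P x1 y ≠ 0 := by
      show (∏ i, P (x1 i) (y i)) ≠ 0
      exact Finset.prod_ne_zero_iff.mpr fun i _ => (h i).2
    rw [if_neg (by tauto)]
    have e0 : prodDist P x0 y ^ (1 - s) = ∏ i, P (x0 i) (y i) ^ (1 - s) := by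
      rw [prodDist, ← Real.finset_prod_rpow _ _ (fun i _ => hP _ _)]
    have e1 : prodDist P x1 y ^ s = ∏ i, P (x1 i) (y i) ^ s := by
      rw [prodDist, ← Real.finset_prod_rpow _ _ (fun i _ => hP _ _)]
    rw [e0, e1, ← Finset.prod_mul_distrib]
    exact Finset.prod_congr rfl fun i _ => (if_neg (by exact fun hc => hc.elim (h i).1 (h i).2)).symm

lemma cherSum_prod {Y : Type*} [Fintype Y] {n : ℕ} (P : Bool → Y → ℝ)
    (hP : ∀ b v, 0 ≤ P b v) (x0 x1 : Fin n → Bool) (s : ℝ) :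
    cherSum (prodDist P x0) (prodDist P x1) s = ∏ i, cherSum (P (x0 i)) (P (x1 i)) s := by
  unfold cherSum
  rw [Fintype.prod_sum (fun i v => if P (x0 i) v = 0 ∨ P (x1 i) v = 0 then 0
      else P (x0 i) v ^ (1 - s) * P (x1 i) v ^ s)]
  exact Finset.sum_congr rfl fun y _ => cherT_prod P hP x0 x1 s y

lemma err_ge_min {Y Z : Type*} [Fintype Y] [Fintype Z] {n : ℕ}
    (P : Bool → Y → ℝ) (Q : Bool → Z → ℝ) (hP : IsChannel P) (hQ : IsChannel Q)
    (π : DetProtocol Y Z n) :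
    ∑ y : Fin n → Y, min (prodDist P (π.x false) y) (prodDist P (π.x true) y) ≤
      errProb P Q π false + errProb P Q π true := by
  unfold errProb
  rw [← Finset.sum_add_distrib]
  refine Finset.sum_le_sum fun y _ => ?_
  rw [← Finset.sum_add_distrib]
  have hone : ∑ z : Fin n → Z, prodDist Q (π.W y) z = 1 := prodDist_sum_one hQ _
  calc min (prodDist P (π.x false) y) (prodDist P (π.x true) y)
      = ∑ z : Fin n → Z, prodDist Q (π.W y) z *
          min (prodDist P (π.x false) y) (prodDist P (π.x true) y) := by
        rw [← Finset.sum_mul, hone, one_mul]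
    _ ≤ _ := by
      refine Finset.sum_le_sum fun z _ => ?_
      have hR : 0 ≤ prodDist Q (π.W y) z := prodDist_nonneg (fun b v => (hQ b).1 v) _ _
      have hminp : min (prodDist P (π.x false) y) (prodDist P (π.x true) y) ≤
          prodDist P (π.x false) y := min_le_left _ _
      have hminq : min (prodDist P (π.x false) y) (prodDist P (π.x true) y) ≤
          prodDist P (π.x true) y := min_le_right _ _
      cases hdz : π.dec z
      · simp
        nlinarith [hminq, hR]
      · simp
        nlinarith [hminp, hR]

lemma uam_eq {g : ℝ → ℝ} {m m' : ℝ} (h : UniqueArgmax g m) (h' : UniqueArgmax g m') :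
    m = m' := by
  by_contra hne
  have h1 := h.2 m' h'.1 (Ne.symm hne)
  have h2 := h'.2 m h.1 hne
  linarith

lemma uam_le {g : ℝ → ℝ} {m : ℝ} (h : UniqueArgmax g m) :
    ∀ s ∈ Set.Icc (0:ℝ) 1, g s ≤ g m := by
  intro s hs
  by_cases hsm : s = m
  · exact hsm ▸ le_refl _
  · exact le_of_lt (h.2 s hs hsm)

lemma mono_of_concave_max {h : ℝ → ℝ} {m : ℝ} (hcc : ConcaveOn ℝ (Set.Icc (0:ℝ) 1) h)
    (hm : m ∈ Set.Icc (0:ℝ) 1) (hmax : ∀ s ∈ Set.Icc (0:ℝ) 1, h s ≤ h m)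
    {t₁ t₂ : ℝ} (h0 : 0 ≤ t₁) (h12 : t₁ ≤ t₂) (h2 : t₂ ≤ m) : h t₁ ≤ h t₂ := by
  rcases eq_or_lt_of_le h12 with rfl | hlt
  · exact le_refl _
  rcases eq_or_lt_of_le h2 with rfl | hlt2
  · exact hmax t₁ ⟨h0, le_trans (le_of_lt hlt) hm.2⟩
  have ht1m : t₁ < m := lt_trans hlt hlt2
  have hd : (0:ℝ) < m - t₁ := by linarith
  set a : ℝ := (m - t₂) / (m - t₁) with ha
  set b : ℝ := (t₂ - t₁) / (m - t₁) with hb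
  have ha0 : 0 ≤ a := div_nonneg (by linarith) (le_of_lt hd)
  have hb0 : 0 ≤ b := div_nonneg (by linarith) (le_of_lt hd)
  have hab : a + b = 1 := by
    rw [ha, hb, ← add_div, show m - t₂ + (t₂ - t₁) = m - t₁ by ring,
      div_self (ne_of_gt hd)]
  have ht1 : t₁ ∈ Set.Icc (0:ℝ) 1 := ⟨h0, by linarith [hm.2]⟩
  have hcomb := hcc.2 ht1 hm ha0 hb0 hab
  have hpt : a • t₁ + b • m = t₂ := by
    show a * t₁ + b * m = t₂
    rw [ha, hb]
    field_simp
    ring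
  rw [hpt] at hcomb
  have hfm : h t₁ ≤ h m := hmax t₁ ht1
  calc h t₁ = a * h t₁ + b * h t₁ := by rw [← add_mul, hab, one_mul]
    _ ≤ a * h t₁ + b * h m := by nlinarith
    _ ≤ h t₂ := by simpa [smul_eq_mul] using hcomb

lemma anti_of_concave_max {h : ℝ → ℝ} {m : ℝ} (hcc : ConcaveOn ℝ (Set.Icc (0:ℝ) 1) h)
    (hm : m ∈ Set.Icc (0:ℝ) 1) (hmax : ∀ s ∈ Set.Icc (0:ℝ) 1, h s ≤ h m)
    {t₁ t₂ : ℝ} (h0 : m ≤ t₁) (h12 : t₁ ≤ t₂) (h2 : t₂ ≤ 1) : h t₂ ≤ h t₁ := by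
  rcases eq_or_lt_of_le h12 with rfl | hlt
  · exact le_refl _
  rcases eq_or_lt_of_le h0 with rfl | hlt2
  · exact hmax t₂ ⟨le_trans hm.1 h12, h2⟩
  have ht2m : m < t₂ := lt_trans hlt2 hlt
  have hd : (0:ℝ) < t₂ - m := by linarith
  set a : ℝ := (t₂ - t₁) / (t₂ - m) with ha
  set b : ℝ := (t₁ - m) / (t₂ - m) with hb
  have ha0 : 0 ≤ a := div_nonneg (by linarith) (le_of_lt hd)
  have hb0 : 0 ≤ b := div_nonneg (by linarith) (le_of_lt hd)
  have hab : a + b = 1 := by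
    rw [ha, hb, ← add_div, show t₂ - t₁ + (t₁ - m) = t₂ - m by ring,
      div_self (ne_of_gt hd)]
  have ht2 : t₂ ∈ Set.Icc (0:ℝ) 1 := ⟨le_trans hm.1 (by linarith), h2⟩
  have hcomb := hcc.2 hm ht2 ha0 hb0 hab
  have hpt : a • m + b • t₂ = t₁ := by
    show a * m + b * t₂ = t₁
    rw [ha, hb]
    field_simp
    ring
  rw [hpt] at hcomb
  have hfm : h t₂ ≤ h m := hmax t₂ ht2
  calc h t₂ = a * h t₂ + b * h t₂ := by rw [← add_mul, hab, one_mul]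
    _ ≤ a * h m + b * h t₂ := by nlinarith
    _ ≤ h t₁ := by simpa [smul_eq_mul] using hcomb

lemma opp_bound {σ : ℝ} (hσ : σ ∈ Set.Icc (0:ℝ) (1/2)) {h : ℝ → ℝ}
    (hcc : ConcaveOn ℝ (Set.Icc (0:ℝ) 1) h)
    (hord : h (1 - σ) ≤ h σ)
    {g : ℝ → ℝ} (hopp : WeaklyOppositeType σ g h)
    {a : ℝ} (ha : UniqueArgmax g a) :
    h a ≤ h σ ∧ h (1 - a) ≤ h σ := by
  obtain ⟨hσ0, hσh⟩ := hσ
  have hσ1 : σ ≤ 1 - σ := by linarith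
  have hσI : σ ∈ Set.Icc (0:ℝ) 1 := ⟨hσ0, by linarith⟩
  have hσ'I : 1 - σ ∈ Set.Icc (0:ℝ) 1 := ⟨by linarith, by linarith⟩
  have ha1 := ha.1
  obtain ⟨ha0, haU⟩ := ha1
  -- helper facts will use the h-maximizer
  rcases hopp with ⟨hg, hh⟩ | ⟨hg, hh⟩
  · -- g weakly skewed, h weakly balanced: σ ≤ mh ≤ 1 - σ
    obtain ⟨mh, hmh, hmh1, hmh2⟩ : ∃ m, UniqueArgmax h m ∧ σ ≤ m ∧ m ≤ 1 - σ := by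
      rcases hh with ⟨m, hm, h1, h2⟩ | ⟨m, hm, h12⟩
      · exact ⟨m, hm, le_of_lt h1, le_of_lt h2⟩
      · rcases h12 with rfl | rfl
        · exact ⟨_, hm, le_refl _, hσ1⟩
        · exact ⟨_, hm, hσ1, le_refl _⟩
    have hmax := uam_le hmh
    have hK1 : ∀ t, 0 ≤ t → t ≤ σ → h t ≤ h σ := fun t h1 h2 =>
      mono_of_concave_max hcc hmh.1 hmax h1 h2 hmh1
    have hK2 : ∀ t, 1 - σ ≤ t → t ≤ 1 → h t ≤ h σ := fun t h1 h2 =>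
      le_trans (anti_of_concave_max hcc hmh.1 hmax hmh2 h1 h2) hord
    have hpos : a < σ ∨ 1 - σ < a ∨ a = σ ∨ a = 1 - σ := by
      rcases hg with ⟨m, hm, hs⟩ | ⟨m, hm, hs⟩
      · have := uam_eq hm ha
        subst this
        tauto
      · have := uam_eq hm ha
        subst this
        tauto
    rcases hpos with hp | hp | rfl | hp
    · exact ⟨hK1 a ha0 (le_of_lt hp), hK2 (1 - a) (by linarith) (by linarith)⟩
    · exact ⟨hK2 a (le_of_lt hp) haU, hK1 (1 - a) (by linarith) (by linarith)⟩
    · exact ⟨le_refl _, hord⟩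
    · subst hp
      exact ⟨hord, by rw [show 1 - (1 - σ) = σ by ring]⟩
  · -- g weakly balanced: σ ≤ a ≤ 1 - σ ; h weakly skewed
    have haI : σ ≤ a ∧ a ≤ 1 - σ := by
      rcases hg with ⟨m, hm, h1, h2⟩ | ⟨m, hm, h12⟩
      · have := uam_eq hm ha; subst this; exact ⟨le_of_lt h1, le_of_lt h2⟩
      · have := uam_eq hm ha; subst this
        rcases h12 with rfl | rfl
        · exact ⟨le_refl _, hσ1⟩
        · exact ⟨hσ1, le_refl _⟩
    obtain ⟨mh, hmh, hpos⟩ : ∃ m, UniqueArgmax h m ∧ (m ≤ σ ∨ 1 - σ ≤ m) := by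
      rcases hh with ⟨m, hm, h12⟩ | ⟨m, hm, h12⟩
      · rcases h12 with h1 | h1
        · exact ⟨m, hm, Or.inl (le_of_lt h1)⟩
        · exact ⟨m, hm, Or.inr (le_of_lt h1)⟩
      · rcases h12 with rfl | rfl
        · exact ⟨_, hm, Or.inl (le_refl _)⟩
        · exact ⟨_, hm, Or.inr (le_refl _)⟩
    have hmax := uam_le hmh
    have hK : ∀ t, σ ≤ t → t ≤ 1 - σ → h t ≤ h σ := by
      intro t h1 h2
      rcases hpos with hp | hp
      · exact anti_of_concave_max hcc hmh.1 hmax hp h1 (by linarith)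
      · exact le_trans (mono_of_concave_max hcc hmh.1 hmax (by linarith) h2 hp) hord
    exact ⟨hK a haI.1 haI.2, hK (1 - a) (by linarith [haI.2]) (by linarith [haI.1])⟩

lemma hasDerivAt_cherSum {α : Type*} [Fintype α] (p q : α → ℝ) (hp : ∀ x, 0 ≤ p x)
    (hq : ∀ x, 0 ≤ q x) (s : ℝ) :
    HasDerivAt (fun t => cherSum p q t)
      (∑ x, if p x = 0 ∨ q x = 0 then 0
        else p x ^ (1 - s) * q x ^ s * Real.log (q x / p x)) s := by
  unfold cherSum
  refine HasDerivAt.fun_sum fun x _ => ?_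
  by_cases hx : p x = 0 ∨ q x = 0
  · simp only [if_pos hx]
    exact hasDerivAt_const _ 0
  · push_neg at hx
    have hp' : 0 < p x := lt_of_le_of_ne (hp x) (Ne.symm hx.1)
    have hq' : 0 < q x := lt_of_le_of_ne (hq x) (Ne.symm hx.2)
    have hfe : ∀ t : ℝ, (if p x = 0 ∨ q x = 0 then 0 else p x ^ (1 - t) * q x ^ t)
        = Real.exp (Real.log (p x) * (1 - t) + Real.log (q x) * t) := by
      intro t
      rw [if_neg (by tauto), Real.rpow_def_of_pos hp', Real.rpow_def_of_pos hq',
        ← Real.exp_add]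
    have hlin : HasDerivAt (fun t : ℝ => Real.log (p x) * (1 - t) + Real.log (q x) * t)
        (Real.log (p x) * (-1) + Real.log (q x) * 1) s := by
      have := (((hasDerivAt_const s (1:ℝ)).sub (hasDerivAt_id s)).const_mul
        (Real.log (p x))).fun_add ((hasDerivAt_id s).const_mul (Real.log (q x)))
      simpa using this
    have hexp := hlin.exp
    have hval : Real.exp (Real.log (p x) * (1 - s) + Real.log (q x) * s) *
        (Real.log (p x) * (-1) + Real.log (q x) * 1)
        = (if p x = 0 ∨ q x = 0 then 0 else p x ^ (1 - s) * q x ^ s * Real.log (q x / p x)) := by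
      rw [if_neg (by tauto), Real.log_div (ne_of_gt hq') (ne_of_gt hp'),
        Real.rpow_def_of_pos hp', Real.rpow_def_of_pos hq', ← Real.exp_add]
      ring
    rw [← hval]
    exact hexp.congr_of_eventuallyEq (Filter.Eventually.of_forall hfe)

lemma deriv_sign_of_max {g : ℝ → ℝ} {m d : ℝ} (hm : m ∈ Set.Icc (0:ℝ) 1)
    (hmax : ∀ s ∈ Set.Icc (0:ℝ) 1, g s ≤ g m) (hd : HasDerivAt g d m) :
    0 ≤ m * d ∧ (1 - m) * d ≤ 0 := by
  rcases eq_or_lt_of_le hm.1 with h0 | h0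
  · -- m = 0 : show d ≤ 0
    have hslope := hasDerivAt_iff_tendsto_slope.mp hd
    have hslope' : Filter.Tendsto (slope g m) (nhdsWithin m (Set.Ioi m)) (nhds d) :=
      hslope.mono_left (nhdsWithin_mono m fun x hx => ne_of_gt hx)
    have hev : ∀ᶠ x in nhdsWithin m (Set.Ioi m), slope g m x ≤ 0 := by
      have h1 : Set.Iio (1:ℝ) ∈ nhdsWithin m (Set.Ioi m) :=
        nhdsWithin_le_nhds (Iio_mem_nhds (by rw [← h0]; norm_num))
      filter_upwards [self_mem_nhdsWithin, h1] with x hx hx1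
      have hgx : g x ≤ g m := hmax x ⟨le_trans hm.1 (le_of_lt hx), le_of_lt hx1⟩
      rw [slope_def_field]
      apply div_nonpos_of_nonpos_of_nonneg <;> [linarith; linarith [Set.mem_Ioi.mp hx]]
    have hd0 : d ≤ 0 := le_of_tendsto hslope' hev
    constructor
    · rw [← h0]; simp
    · nlinarith [hm.2]
  rcases eq_or_lt_of_le hm.2 with h1 | h1
  · -- m = 1 : show 0 ≤ d
    have hslope := hasDerivAt_iff_tendsto_slope.mp hd
    have hslope' : Filter.Tendsto (slope g m) (nhdsWithin m (Set.Iio m)) (nhds d) :=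
      hslope.mono_left (nhdsWithin_mono m fun x hx => ne_of_lt hx)
    have hev : ∀ᶠ x in nhdsWithin m (Set.Iio m), 0 ≤ slope g m x := by
      have h2 : Set.Ioi (0:ℝ) ∈ nhdsWithin m (Set.Iio m) :=
        nhdsWithin_le_nhds (Ioi_mem_nhds (by rw [h1]; norm_num))
      filter_upwards [self_mem_nhdsWithin, h2] with x hx hx1
      have hgx : g x ≤ g m := hmax x ⟨le_of_lt (Set.mem_Ioi.mp hx1),
        le_trans (le_of_lt hx) hm.2⟩
      rw [slope_def_field]
      have hnum : g x - g m ≤ 0 := by linarith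
      have hden : x - m < 0 := by linarith [Set.mem_Iio.mp hx]
      rw [div_nonneg_iff]
      exact Or.inr ⟨hnum, le_of_lt hden⟩

    have hd0 : 0 ≤ d := ge_of_tendsto hslope' hev
    constructor
    · nlinarith [hm.1]
    · rw [h1]; simp
  · -- interior
    have hloc : IsLocalMax g m := by
      have : Set.Ioo (0:ℝ) 1 ∈ nhds m := (isOpen_Ioo).mem_nhds ⟨h0, h1⟩
      exact Filter.eventually_of_mem this fun x hx => hmax x ⟨le_of_lt hx.1, le_of_lt hx.2⟩
    have hd0 : d = 0 := by
      have := hloc.deriv_eq_zero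
      rw [hd.deriv] at this
      exact this
    rw [hd0]
    norm_num

lemma prodmeas_sum_one {Y : Type*} [Fintype Y] {n : ℕ} (Qi : Fin n → Y → ℝ)
    (hQsum : ∀ i, ∑ v, Qi i v = 1) : ∑ y : Fin n → Y, ∏ i, Qi i (y i) = 1 := by
  rw [← Fintype.prod_sum (fun i v => Qi i v)]
  simp [hQsum]

lemma prodmeas_single {Y : Type*} [Fintype Y] {n : ℕ} (Qi : Fin n → Y → ℝ)
    (hQsum : ∀ i, ∑ v, Qi i v = 1) (i : Fin n) (f : Y → ℝ) :
    ∑ y : Fin n → Y, (∏ k, Qi k (y k)) * f (y i) = ∑ v, Qi i v * f v := by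
  have h1 : ∀ y : Fin n → Y, (∏ k, Qi k (y k)) * f (y i)
      = ∏ k, (Qi k (y k) * (if k = i then f (y k) else 1)) := by
    intro y
    rw [Finset.prod_mul_distrib]
    congr 1
    simp [Finset.prod_ite_eq']
  simp_rw [h1]
  rw [← Fintype.prod_sum (fun k v => Qi k v * (if k = i then f v else 1))]
  rw [Finset.prod_eq_single i]
  · simp
  · intro k _ hk
    simp only [if_neg hk, mul_one]
    exact hQsum k
  · simp

lemma prodmeas_pair {Y : Type*} [Fintype Y] {n : ℕ} (Qi : Fin n → Y → ℝ)
    (hQsum : ∀ i, ∑ v, Qi i v = 1) {i j : Fin n} (hij : i ≠ j) (f g : Y → ℝ) :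
    ∑ y : Fin n → Y, (∏ k, Qi k (y k)) * (f (y i) * g (y j))
      = (∑ v, Qi i v * f v) * (∑ v, Qi j v * g v) := by
  have h1 : ∀ y : Fin n → Y, (∏ k, Qi k (y k)) * (f (y i) * g (y j))
      = ∏ k, (Qi k (y k) * ((if k = i then f (y k) else 1) * (if k = j then g (y k) else 1))) := by
    intro y
    rw [Finset.prod_mul_distrib, Finset.prod_mul_distrib]
    simp [Finset.prod_ite_eq']
  simp_rw [h1]
  rw [← Fintype.prod_sum (fun k v => Qi k v * ((if k = i then f v else 1) * (if k = j then g v else 1)))]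
  have h2 : ∀ k, (∑ v, Qi k v * ((if k = i then f v else 1) * (if k = j then g v else 1)))
      = (if k = i then (∑ v, Qi i v * f v) else 1) * (if k = j then (∑ v, Qi j v * g v) else 1) := by
    intro k
    by_cases hki : k = i
    · subst hki
      simp [hij]
    · by_cases hkj : k = j
      · subst hkj
        simp [hki]
      · simp only [if_neg hki, if_neg hkj, one_mul, mul_one]
        exact hQsum k
  rw [Finset.prod_congr rfl fun k _ => h2 k, Finset.prod_mul_distrib]
  simp [Finset.prod_ite_eq']

lemma prodmeas_mean {Y : Type*} [Fintype Y] {n : ℕ} (Qi li : Fin n → Y → ℝ)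
    (hQsum : ∀ i, ∑ v, Qi i v = 1) :
    ∑ y : Fin n → Y, (∏ k, Qi k (y k)) * (∑ i, li i (y i)) = ∑ i, ∑ v, Qi i v * li i v := by
  simp_rw [Finset.mul_sum]
  rw [Finset.sum_comm]
  exact Finset.sum_congr rfl fun i _ => prodmeas_single Qi hQsum i (li i)

lemma prodmeas_var_le {Y : Type*} [Fintype Y] {n : ℕ} (Qi li : Fin n → Y → ℝ) (L : ℝ)
    (hQsum : ∀ i, ∑ v, Qi i v = 1)
    (hsq : ∀ i v, Qi i v * (li i v)^2 ≤ Qi i v * L^2) :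
    ∑ y : Fin n → Y, (∏ k, Qi k (y k)) * ((∑ i, li i (y i)) - ∑ i, ∑ v, Qi i v * li i v)^2
      ≤ n * L^2 := by
  set m : Fin n → ℝ := fun i => ∑ v, Qi i v * li i v with hm
  set D : Fin n → Y → ℝ := fun i v => li i v - m i with hD
  have hDsum : ∀ i, ∑ v, Qi i v * D i v = 0 := by
    intro i
    have : ∀ v, Qi i v * D i v = Qi i v * li i v - Qi i v * m i := by
      intro v; rw [hD]; ring
    rw [Finset.sum_congr rfl fun v _ => this v, Finset.sum_sub_distrib, ← Finset.sum_mul,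
      hQsum i, one_mul]
    simp [hm]
  have hDvar : ∀ i, ∑ v, Qi i v * (D i v)^2 ≤ L^2 := by
    intro i
    have e1 : ∑ v, Qi i v * (D i v)^2 = (∑ v, Qi i v * (li i v)^2) - (m i)^2 := by
      have hpt : ∀ v, Qi i v * (D i v)^2
          = Qi i v * (li i v)^2 - 2 * m i * (Qi i v * li i v) + (m i)^2 * Qi i v := by
        intro v; rw [hD]; ring
      rw [Finset.sum_congr rfl fun v _ => hpt v, Finset.sum_add_distrib, Finset.sum_sub_distrib,
        ← Finset.mul_sum, ← Finset.mul_sum, hQsum i]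
      have : ∑ v, Qi i v * li i v = m i := by rw [hm]
      rw [this]
      ring
    have e2 : ∑ v, Qi i v * (li i v)^2 ≤ L^2 := by
      calc ∑ v, Qi i v * (li i v)^2 ≤ ∑ v, Qi i v * L^2 :=
            Finset.sum_le_sum fun v _ => hsq i v
        _ = L^2 := by rw [← Finset.sum_mul, hQsum i, one_mul]
    nlinarith [sq_nonneg (m i)]
  have hsub : ∀ y : Fin n → Y, (∑ i, li i (y i)) - ∑ i, m i = ∑ i, D i (y i) := by
    intro y
    rw [hD, ← Finset.sum_sub_distrib]
  have hkey : ∑ y : Fin n → Y, (∏ k, Qi k (y k)) * ((∑ i, li i (y i)) - ∑ i, m i)^2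
      = ∑ i, ∑ v, Qi i v * (D i v)^2 := by
    have hsqr : ∀ y : Fin n → Y, (∏ k, Qi k (y k)) * ((∑ i, li i (y i)) - ∑ i, m i)^2
        = ∑ i, ∑ j, (∏ k, Qi k (y k)) * (D i (y i) * D j (y j)) := by
      intro y
      rw [hsub y, sq, Finset.sum_mul_sum, Finset.mul_sum]
      refine Finset.sum_congr rfl fun i _ => ?_
      rw [Finset.mul_sum]
    rw [Finset.sum_congr rfl fun y _ => hsqr y, Finset.sum_comm]
    refine Finset.sum_congr rfl fun i _ => ?_
    rw [Finset.sum_comm, Finset.sum_eq_single i]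
    · rw [prodmeas_single Qi hQsum i (fun v => D i v * D i v)]
      refine Finset.sum_congr rfl fun v _ => ?_
      rw [sq]
    · intro j _ hji
      rw [prodmeas_pair Qi hQsum (Ne.symm hji) (D i) (D j), hDsum i, zero_mul]
    · simp
  rw [hkey]
  calc ∑ i, ∑ v, Qi i v * (D i v)^2 ≤ ∑ _i : Fin n, L^2 :=
        Finset.sum_le_sum fun i _ => hDvar i
    _ = n * L^2 := by rw [Finset.sum_const, Finset.card_univ, Fintype.card_fin, nsmul_eq_mul]

lemma coord_id {a b s : ℝ} (ha : 0 < a) (hb : 0 < b) :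
    a ^ (1 - s) * b ^ s * Real.exp (s * Real.log (a / b)) = a ∧
    a ^ (1 - s) * b ^ s * Real.exp (-((1 - s) * Real.log (a / b))) = b := by
  rw [Real.rpow_def_of_pos ha, Real.rpow_def_of_pos hb,
    Real.log_div (ne_of_gt ha) (ne_of_gt hb), ← Real.exp_add, ← Real.exp_add,
    ← Real.exp_add]
  constructor
  · rw [show Real.log a * (1 - s) + Real.log b * s + s * (Real.log a - Real.log b)
      = Real.log a by ring, Real.exp_log ha]
  · rw [show Real.log a * (1 - s) + Real.log b * s + -((1 - s) * (Real.log a - Real.log b))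
      = Real.log b by ring, Real.exp_log hb]

set_option maxHeartbeats 1000000 in
lemma min_sum_bound {Y : Type*} [Fintype Y] {n : ℕ} (hn : 0 < n)
    (P : Bool → Y → ℝ) (hP : IsChannel P)
    (hPsupp : CommonSupport (P false) (P true))
    {pmin : ℝ} (hpm : 0 < pmin) (hpm1 : pmin ≤ 1)
    (hlb : ∀ b v, P b v ≠ 0 → pmin ≤ P b v)
    (x0 x1 : Fin n → Bool) {s₀ : ℝ} (hs₀ : s₀ ∈ Set.Icc (0:ℝ) 1)
    {d : ℝ}
    (hd : HasDerivAt (fun s => dC (prodDist P x0) (prodDist P x1) s) d s₀)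
    (hd1 : 0 ≤ s₀ * d) (hd2 : (1 - s₀) * d ≤ 0) :
    (1/2) * Real.exp (-(dC (prodDist P x0) (prodDist P x1) s₀
        + Real.sqrt (2 * n) * (- Real.log pmin)))
      ≤ ∑ y : Fin n → Y, min (prodDist P x0 y) (prodDist P x1 y) := by
  classical
  have hPnn : ∀ b v, 0 ≤ P b v := fun b v => (hP b).1 v
  have hsupp_i : ∀ b b' : Bool, CommonSupport (P b) (P b') := by
    obtain ⟨v, hv1, hv2⟩ := hPsupp
    have hco : ∀ b : Bool, P b v ≠ 0 := fun b => by cases b <;> assumption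
    exact fun b b' => ⟨v, hco b, hco b'⟩
  set p := prodDist P x0 with hp
  set q := prodDist P x1 with hq
  have hpnn : ∀ y, 0 ≤ p y := fun y => prodDist_nonneg hPnn x0 y
  have hqnn : ∀ y, 0 ≤ q y := fun y => prodDist_nonneg hPnn x1 y
  have hsuppP : CommonSupport p q := by
    obtain ⟨v, hv1, hv2⟩ := hPsupp
    have hco : ∀ b : Bool, P b v ≠ 0 := fun b => by cases b <;> assumption
    refine ⟨fun _ => v, ?_, ?_⟩
    · show (∏ i, P (x0 i) v) ≠ 0
      exact Finset.prod_ne_zero_iff.mpr fun i _ => hco (x0 i)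
    · show (∏ i, P (x1 i) v) ≠ 0
      exact Finset.prod_ne_zero_iff.mpr fun i _ => hco (x1 i)
  have hCpos : 0 < cherSum p q s₀ := cherSum_pos hpnn hqnn hsuppP s₀
  set C : ℝ := cherSum p q s₀ with hC
  set Ci : Fin n → ℝ := fun i => cherSum (P (x0 i)) (P (x1 i)) s₀ with hCi
  have hCipos : ∀ i, 0 < Ci i := fun i => cherSum_pos (hPnn _) (hPnn _) (hsupp_i _ _) s₀
  have hCprod : C = ∏ i, Ci i := by
    rw [hC, hp, hq]
    exact cherSum_prod P hPnn x0 x1 s₀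
  set Ti : Fin n → Y → ℝ := fun i v =>
    if P (x0 i) v = 0 ∨ P (x1 i) v = 0 then 0
    else P (x0 i) v ^ (1 - s₀) * P (x1 i) v ^ s₀ with hTi
  have hTinn : ∀ i v, 0 ≤ Ti i v := fun i v => cherT_nonneg (hPnn _) (hPnn _) s₀ v
  have hTisum : ∀ i, ∑ v, Ti i v = Ci i := fun i => rfl
  set Qi : Fin n → Y → ℝ := fun i v => Ti i v / Ci i with hQi
  have hQinn : ∀ i v, 0 ≤ Qi i v := fun i v => div_nonneg (hTinn i v) (le_of_lt (hCipos i))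
  have hQisum : ∀ i, ∑ v, Qi i v = 1 := by
    intro i
    simp only [hQi]
    rw [← Finset.sum_div, hTisum i, div_self (ne_of_gt (hCipos i))]
  set li : Fin n → Y → ℝ := fun i v =>
    if P (x0 i) v = 0 ∨ P (x1 i) v = 0 then 0
    else Real.log (P (x0 i) v / P (x1 i) v) with hli
  set L : ℝ := - Real.log pmin with hLdef
  have hL0 : 0 ≤ L := by
    rw [hLdef]
    simpa using Real.log_nonpos (le_of_lt hpm) hpm1
  have hsq : ∀ i v, Qi i v * (li i v)^2 ≤ Qi i v * L^2 := by
    intro i v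
    by_cases hz : P (x0 i) v = 0 ∨ P (x1 i) v = 0
    · have h0 : Qi i v = 0 := by simp only [hQi, hTi, if_pos hz, zero_div]
      rw [h0]; simp
    · push_neg at hz
      have ha0 : 0 < P (x0 i) v := lt_of_le_of_ne (hPnn _ _) (Ne.symm hz.1)
      have hb0 : 0 < P (x1 i) v := lt_of_le_of_ne (hPnn _ _) (Ne.symm hz.2)
      have h0 : pmin ≤ P (x0 i) v := hlb _ _ hz.1
      have h1 : pmin ≤ P (x1 i) v := hlb _ _ hz.2
      have hu0 : P (x0 i) v ≤ 1 := pmf_le_one (hP _) v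
      have hu1 : P (x1 i) v ≤ 1 := pmf_le_one (hP _) v
      have la1 : Real.log pmin ≤ Real.log (P (x0 i) v) := Real.log_le_log hpm h0
      have la2 : Real.log (P (x0 i) v) ≤ 0 := Real.log_nonpos (le_of_lt ha0) hu0
      have lb1 : Real.log pmin ≤ Real.log (P (x1 i) v) := Real.log_le_log hpm h1
      have lb2 : Real.log (P (x1 i) v) ≤ 0 := Real.log_nonpos (le_of_lt hb0) hu1
      have hlieq : li i v = Real.log (P (x0 i) v) - Real.log (P (x1 i) v) := by
        simp only [hli, if_neg (not_or.mpr hz)]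
        exact Real.log_div hz.1 hz.2
      have hsq' : (li i v)^2 ≤ L^2 := by
        rw [hlieq, hLdef]
        nlinarith
      exact mul_le_mul_of_nonneg_left hsq' (hQinn i v)
  set mi : Fin n → ℝ := fun i => ∑ v, Qi i v * li i v with hmi
  set μ : ℝ := ∑ i, mi i with hmu
  set Qd : (Fin n → Y) → ℝ := fun y => ∏ k, Qi k (y k) with hQd
  set ell : (Fin n → Y) → ℝ := fun y => ∑ i, li i (y i) with hell
  have hQdT : ∀ y, Qd y = (if p y = 0 ∨ q y = 0 then 0
      else p y ^ (1 - s₀) * q y ^ s₀) / C := by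
    intro y
    have h1 : (if p y = 0 ∨ q y = 0 then 0 else p y ^ (1 - s₀) * q y ^ s₀)
        = ∏ i, Ti i (y i) := by
      simp only [hTi]
      rw [hp, hq]
      exact cherT_prod P hPnn x0 x1 s₀ y
    rw [h1, hCprod]
    simp only [hQd, hQi]
    rw [Finset.prod_div_distrib]
  have hQdnn : ∀ y, 0 ≤ Qd y := fun y => Finset.prod_nonneg fun k _ => hQinn k (y k)
  have hQdsum : ∑ y : Fin n → Y, Qd y = 1 := by
    simp only [hQd]
    exact prodmeas_sum_one Qi hQisum
  have hmean : ∑ y : Fin n → Y, Qd y * ell y = μ := by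
    simp only [hQd, hell, hmu, hmi]
    exact prodmeas_mean Qi li hQisum
  have hcoords : ∀ y : Fin n → Y, p y ≠ 0 → q y ≠ 0 →
      ∀ i, P (x0 i) (y i) ≠ 0 ∧ P (x1 i) (y i) ≠ 0 := by
    intro y hpz hqz i
    constructor
    · intro h0
      exact hpz (by rw [hp]; exact Finset.prod_eq_zero (Finset.mem_univ i) h0)
    · intro h0
      exact hqz (by rw [hq]; exact Finset.prod_eq_zero (Finset.mem_univ i) h0)
  have hellog : ∀ y : Fin n → Y, p y ≠ 0 → q y ≠ 0 → ell y = Real.log (p y / q y) := by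
    intro y hpz hqz
    have hco := hcoords y hpz hqz
    have hdiv : p y / q y = ∏ i, (P (x0 i) (y i) / P (x1 i) (y i)) := by
      rw [hp, hq]
      exact (Finset.prod_div_distrib _ _).symm
    rw [hdiv, Real.log_prod (fun i _ => div_ne_zero (hco i).1 (hco i).2)]
    simp only [hell, hli]
    refine Finset.sum_congr rfl fun i _ => ?_
    rw [if_neg (not_or.mpr (hco i))]
  -- derivative identification
  have hCne : cherSum p q s₀ ≠ 0 := ne_of_gt hCpos
  have hgd : HasDerivAt (fun s => dC p q s)
      (-((∑ y, if p y = 0 ∨ q y = 0 then 0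
        else p y ^ (1 - s₀) * q y ^ s₀ * Real.log (q y / p y)) / cherSum p q s₀)) s₀ := by
    have hCd := hasDerivAt_cherSum p q hpnn hqnn s₀
    have h2 := (hCd.log hCne).neg
    exact h2.congr_of_eventuallyEq (Filter.Eventually.of_forall fun s => rfl)
  have hdμ : d = μ := by
    have heq := hd.unique hgd
    have hCne' : C ≠ 0 := ne_of_gt hCpos
    have hterm : ∀ y, -((if p y = 0 ∨ q y = 0 then 0
        else p y ^ (1 - s₀) * q y ^ s₀ * Real.log (q y / p y)) / C) = Qd y * ell y := by
      intro y
      by_cases hz : p y = 0 ∨ q y = 0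
      · rw [if_pos hz]
        have h0 : Qd y = 0 := by rw [hQdT y, if_pos hz, zero_div]
        rw [h0]
        simp
      · push_neg at hz
        rw [if_neg (not_or.mpr hz), hQdT y, if_neg (not_or.mpr hz),
          hellog y hz.1 hz.2, Real.log_div hz.2 hz.1, Real.log_div hz.1 hz.2]
        field_simp
        ring
    rw [heq, ← hC, Finset.sum_div, ← Finset.sum_neg_distrib,
      Finset.sum_congr rfl fun y _ => hterm y, hmean]
  -- sign conditions on μ
  have hs1 : 0 ≤ s₀ * μ := hdμ ▸ hd1
  have hs2 : (1 - s₀) * μ ≤ 0 := hdμ ▸ hd2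
  set Δ : ℝ := Real.sqrt (2 * n) * L with hΔ
  have hΔ0 : 0 ≤ Δ := mul_nonneg (Real.sqrt_nonneg _) hL0
  set B : Finset (Fin n → Y) := Finset.univ.filter (fun y => (ell y - μ)^2 ≤ Δ^2) with hB
  have hvar : ∑ y : Fin n → Y, Qd y * (ell y - μ)^2 ≤ n * L^2 := by
    simp only [hQd, hell, hmu, hmi]
    exact prodmeas_var_le Qi li L hQisum hsq
  have hcheb : (1:ℝ)/2 ≤ ∑ y ∈ B, Qd y := by
    have hsplit : ∑ y ∈ B, Qd y
        + ∑ y ∈ Finset.univ.filter (fun y => ¬ ((ell y - μ)^2 ≤ Δ^2)), Qd y = 1 := by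
      rw [hB, Finset.sum_filter_add_sum_filter_not]
      exact hQdsum
    have hbad : ∑ y ∈ Finset.univ.filter (fun y => ¬ ((ell y - μ)^2 ≤ Δ^2)), Qd y ≤ 1/2 := by
      rcases eq_or_lt_of_le hL0 with hL | hL
      · have hnn : ∀ y' ∈ Finset.univ, 0 ≤ Qd y' * (ell y' - μ)^2 :=
          fun y' _ => mul_nonneg (hQdnn y') (sq_nonneg _)
        have hle : ∑ y' : Fin n → Y, Qd y' * (ell y' - μ)^2 ≤ 0 := by
          calc ∑ y' : Fin n → Y, Qd y' * (ell y' - μ)^2 ≤ n * L^2 := hvar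
            _ = 0 := by rw [← hL]; ring
        have hvz := (Finset.sum_eq_zero_iff_of_nonneg hnn).mp
          (le_antisymm hle (Finset.sum_nonneg hnn))
        refine le_trans (le_of_eq (Finset.sum_eq_zero ?_)) (by norm_num)
        intro y hy
        obtain ⟨-, hy2⟩ := Finset.mem_filter.mp hy
        by_contra hQ0
        have h2 : (ell y - μ)^2 = 0 := by
          rcases mul_eq_zero.mp (hvz y (Finset.mem_univ y)) with h | h
          · exact absurd h hQ0
          · exact h
        exact hy2 (by rw [h2]; positivity)
      · have hnpos : (0:ℝ) < n := by exact_mod_cast hn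
        have hΔsq : Δ^2 = 2 * n * L^2 := by
          rw [hΔ, mul_pow, Real.sq_sqrt (by positivity)]
        have hΔpos : (0:ℝ) < 2 * n * L^2 :=
          mul_pos (mul_pos two_pos hnpos) (pow_pos hL 2)
        have hkey : (∑ y ∈ Finset.univ.filter (fun y => ¬ ((ell y - μ)^2 ≤ Δ^2)), Qd y)
            * (2 * n * L^2) ≤ n * L^2 := by
          rw [Finset.sum_mul]
          calc ∑ y ∈ Finset.univ.filter (fun y => ¬ ((ell y - μ)^2 ≤ Δ^2)),
                Qd y * (2 * n * L^2)
              ≤ ∑ y ∈ Finset.univ.filter (fun y => ¬ ((ell y - μ)^2 ≤ Δ^2)),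
                Qd y * (ell y - μ)^2 := by
                refine Finset.sum_le_sum fun y hy => ?_
                have h2 := (Finset.mem_filter.mp hy).2
                have h3 : Δ^2 ≤ (ell y - μ)^2 := le_of_lt (lt_of_not_ge h2)
                rw [hΔsq] at h3
                exact mul_le_mul_of_nonneg_left h3 (hQdnn y)
            _ ≤ ∑ y : Fin n → Y, Qd y * (ell y - μ)^2 :=
                Finset.sum_le_sum_of_subset_of_nonneg (Finset.filter_subset _ _)
                  (fun y _ _ => mul_nonneg (hQdnn y) (sq_nonneg _))
            _ ≤ n * L^2 := hvar
        have h4 : ∑ y ∈ Finset.univ.filter (fun y => ¬ ((ell y - μ)^2 ≤ Δ^2)), Qd y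
            ≤ (n * L^2) / (2 * n * L^2) := by
          rw [le_div_iff₀ hΔpos]
          exact hkey
        calc ∑ y ∈ Finset.univ.filter (fun y => ¬ ((ell y - μ)^2 ≤ Δ^2)), Qd y
            ≤ (n * L^2) / (2 * n * L^2) := h4
          _ = 1/2 := by
              field_simp
    linarith
  have hmin : ∀ y ∈ B, C * Qd y * Real.exp (-Δ) ≤ min (p y) (q y) := by
    intro y hy
    obtain ⟨-, hyB⟩ := Finset.mem_filter.mp hy
    by_cases hz : p y = 0 ∨ q y = 0
    · have hQd0 : Qd y = 0 := by rw [hQdT y, if_pos hz, zero_div]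
      rw [hQd0, mul_zero, zero_mul]
      exact le_min (hpnn y) (hqnn y)
    · push_neg at hz
      have hco := hcoords y hz.1 hz.2
      have habs : |ell y - μ| ≤ Δ := by
        rw [← Real.sqrt_sq_eq_abs]
        calc Real.sqrt ((ell y - μ)^2) ≤ Real.sqrt (Δ^2) := Real.sqrt_le_sqrt hyB
          _ = Δ := Real.sqrt_sq hΔ0
      obtain ⟨hab1, hab2⟩ := abs_le.mp habs
      have he1 : -Δ ≤ s₀ * ell y := by
        have t1 : s₀ * (-Δ) ≤ s₀ * (ell y - μ) := mul_le_mul_of_nonneg_left hab1 hs₀.1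
        have t2 : s₀ * Δ ≤ Δ := mul_le_of_le_one_left hΔ0 hs₀.2
        have e : s₀ * ell y = s₀ * μ + s₀ * (ell y - μ) := by ring
        linarith [hs1]
      have he2 : -Δ ≤ -((1 - s₀) * ell y) := by
        have t1 : (1 - s₀) * (ell y - μ) ≤ (1 - s₀) * Δ :=
          mul_le_mul_of_nonneg_left hab2 (by linarith [hs₀.2])
        have t2 : (1 - s₀) * Δ ≤ Δ := mul_le_of_le_one_left hΔ0 (by linarith [hs₀.1])
        have e : -((1 - s₀) * ell y) = -((1 - s₀) * μ) - (1 - s₀) * (ell y - μ) := by ring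
        linarith [hs2]
      have h1 : (if p y = 0 ∨ q y = 0 then 0 else p y ^ (1 - s₀) * q y ^ s₀)
          = ∏ i, Ti i (y i) := by
        simp only [hTi]
        rw [hp, hq]
        exact cherT_prod P hPnn x0 x1 s₀ y
      have hTeq : C * Qd y = ∏ i, Ti i (y i) := by
        rw [hQdT y, h1, mul_comm, div_mul_cancel₀ _ (ne_of_gt hCpos)]
      have hTipos : ∀ i, Ti i (y i)
          = P (x0 i) (y i) ^ (1 - s₀) * P (x1 i) (y i) ^ s₀ := fun i => by
        simp only [hTi]
        rw [if_neg (not_or.mpr (hco i))]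
      have hlieq : ∀ i, li i (y i) = Real.log (P (x0 i) (y i) / P (x1 i) (y i)) := fun i => by
        simp only [hli]
        rw [if_neg (not_or.mpr (hco i))]
      have hpy : p y = (∏ i, Ti i (y i)) * Real.exp (s₀ * ell y) := by
        have hexp : Real.exp (s₀ * ell y) = ∏ i, Real.exp (s₀ * li i (y i)) := by
          rw [hell]
          simp only []
          rw [Finset.mul_sum, Real.exp_sum]
        rw [hexp, ← Finset.prod_mul_distrib, hp]
        refine Finset.prod_congr rfl fun i _ => ?_
        have hpa : 0 < P (x0 i) (y i) := lt_of_le_of_ne (hPnn _ _) (Ne.symm (hco i).1)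
        have hpb : 0 < P (x1 i) (y i) := lt_of_le_of_ne (hPnn _ _) (Ne.symm (hco i).2)
        rw [hTipos i, hlieq i]
        exact ((coord_id hpa hpb).1).symm
      have hqy : q y = (∏ i, Ti i (y i)) * Real.exp (-((1 - s₀) * ell y)) := by
        have hexp : Real.exp (-((1 - s₀) * ell y))
            = ∏ i, Real.exp (-((1 - s₀) * li i (y i))) := by
          rw [hell]
          simp only []
          rw [Finset.mul_sum, ← Finset.sum_neg_distrib, Real.exp_sum]
        rw [hexp, ← Finset.prod_mul_distrib, hq]
        refine Finset.prod_congr rfl fun i _ => ?_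
        have hpa : 0 < P (x0 i) (y i) := lt_of_le_of_ne (hPnn _ _) (Ne.symm (hco i).1)
        have hpb : 0 < P (x1 i) (y i) := lt_of_le_of_ne (hPnn _ _) (Ne.symm (hco i).2)
        rw [hTipos i, hlieq i]
        exact ((coord_id hpa hpb).2).symm
      have hTnn : 0 ≤ ∏ i, Ti i (y i) := Finset.prod_nonneg fun i _ => hTinn i (y i)
      rw [hTeq]
      refine le_min ?_ ?_
      · rw [hpy]
        exact mul_le_mul_of_nonneg_left (Real.exp_le_exp.mpr he1) hTnn
      · rw [hqy]
        exact mul_le_mul_of_nonneg_left (Real.exp_le_exp.mpr he2) hTnn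
  have hCexp : C = Real.exp (-(dC p q s₀)) := by
    have hdc : dC p q s₀ = - Real.log C := by rw [hC]; rfl
    rw [hdc, neg_neg, Real.exp_log hCpos]
  calc (1/2) * Real.exp (-(dC p q s₀ + Δ))
      ≤ (∑ y ∈ B, Qd y) * Real.exp (-(dC p q s₀ + Δ)) :=
        mul_le_mul_of_nonneg_right hcheb (le_of_lt (Real.exp_pos _))
    _ = ∑ y ∈ B, C * Qd y * Real.exp (-Δ) := by
        rw [Finset.sum_mul]
        refine Finset.sum_congr rfl fun y _ => ?_
        rw [show -(dC p q s₀ + Δ) = -(dC p q s₀) + -Δ by ring, Real.exp_add, hCexp]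
        ring
    _ ≤ ∑ y ∈ B, min (p y) (q y) := Finset.sum_le_sum hmin
    _ ≤ ∑ y : Fin n → Y, min (p y) (q y) :=
        Finset.sum_le_sum_of_subset_of_nonneg (Finset.filter_subset _ _)
          (fun y _ _ => le_min (hpnn y) (hqnn y))

lemma dC_prod_le {Y : Type*} [Fintype Y] {n : ℕ} (P : Bool → Y → ℝ) (hP : IsChannel P)
    (hPsupp : CommonSupport (P false) (P true)) (x0 x1 : Fin n → Bool) {s₀ σ : ℝ}
    (hσ0 : 0 ≤ dC (P false) (P true) σ)
    (hA : dC (P false) (P true) s₀ ≤ dC (P false) (P true) σ)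
    (hB : dC (P false) (P true) (1 - s₀) ≤ dC (P false) (P true) σ) :
    dC (prodDist P x0) (prodDist P x1) s₀ ≤ n * dC (P false) (P true) σ := by
  have hPnn : ∀ b v, 0 ≤ P b v := fun b v => (hP b).1 v
  have hsupp_i : ∀ b b' : Bool, CommonSupport (P b) (P b') := by
    obtain ⟨v, hv1, hv2⟩ := hPsupp
    have hco : ∀ b : Bool, P b v ≠ 0 := fun b => by cases b <;> assumption
    exact fun b b' => ⟨v, hco b, hco b'⟩
  have hsplit : dC (prodDist P x0) (prodDist P x1) s₀
      = ∑ i, dC (P (x0 i)) (P (x1 i)) s₀ := by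
    unfold dC
    rw [cherSum_prod P hPnn x0 x1 s₀,
      Real.log_prod (fun i _ =>
        ne_of_gt (cherSum_pos (hPnn _) (hPnn _) (hsupp_i _ _) s₀)),
      ← Finset.sum_neg_distrib]
  rw [hsplit]
  have hzero : ∀ b : Bool, dC (P b) (P b) s₀ = 0 := by
    intro b
    unfold dC
    rw [cherSum_refl (hP b) s₀, Real.log_one, neg_zero]
  calc ∑ i, dC (P (x0 i)) (P (x1 i)) s₀ ≤ ∑ _i : Fin n, dC (P false) (P true) σ := by
        refine Finset.sum_le_sum fun i _ => ?_
        cases h0 : x0 i <;> cases h1 : x1 i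
        · rw [hzero false]; exact hσ0
        · exact hA
        · rw [show dC (P true) (P false) s₀ = dC (P false) (P true) (1 - s₀) from by
            unfold dC; rw [cherSum_comm]]
          exact hB
        · rw [hzero true]; exact hσ0
    _ = n * dC (P false) (P true) σ := by
        rw [Finset.sum_const, Finset.card_univ, Fintype.card_fin, nsmul_eq_mul]

/-- Lemma 11 of the paper. -/
theorem opp_type_P_bound {Y Z : Type*} [Fintype Y] [Fintype Z]
    (P : Bool → Y → ℝ) (Q : Bool → Z → ℝ)
    (hP : IsChannel P) (hQ : IsChannel Q)
    (hPsupp : CommonSupport (P false) (P true))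
    (hQsupp : CommonSupport (Q false) (Q true))
    (pmin : ℝ) (hpmin : MinTransPair P Q pmin)
    (sStar : ℝ) (hsStar : sStar ∈ Set.Icc (0 : ℝ) (1 / 2))
    (hmax : ∀ s ∈ Set.Icc (0 : ℝ) 1, Efun P Q s ≤ Efun P Q sStar)
    (hPord : dC (P false) (P true) (1 - sStar) ≤ dC (P false) (P true) sStar)
    (hQord : dC (Q false) (Q true) (1 - sStar) ≤ dC (Q false) (Q true) sStar)
    {n : ℕ} (π : DetProtocol Y Z n)
    (hgnc : NonConstantOn
      (fun s => dC (prodDist P (π.x false)) (prodDist P (π.x true)) s))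
    (hhnc : NonConstantOn (fun s => dC (P false) (P true) s))
    (hgcc : ConcaveOn ℝ (Set.Icc (0 : ℝ) 1)
      (fun s => dC (prodDist P (π.x false)) (prodDist P (π.x true)) s))
    (hhcc : ConcaveOn ℝ (Set.Icc (0 : ℝ) 1) (fun s => dC (P false) (P true) s))
    (hopp : WeaklyOppositeType sStar
      (fun s => dC (prodDist P (π.x false)) (prodDist P (π.x true)) s)
      (fun s => dC (P false) (P true) s)) :
    - Real.log (errProb P Q π false + errProb P Q π true) ≤
      n * dC (P false) (P true) sStar +
        Real.sqrt (2 * n) * Real.log (1 / pmin) + Real.log 4 := by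
  classical
  have hpm1 : pmin ≤ 1 := by
    rcases hpmin.2.1 with ⟨b, y, hby⟩ | ⟨b, z, hbz⟩
    · rw [← hby]; exact pmf_le_one (hP b) y
    · rw [← hbz]; exact pmf_le_one (hQ b) z
  have hLlog : Real.log (1 / pmin) = - Real.log pmin := by rw [one_div, Real.log_inv]
  have hlog2 : Real.log 2 ≤ Real.log 4 := Real.log_le_log (by norm_num) (by norm_num)
  have hlog4 : (0:ℝ) ≤ Real.log 4 := Real.log_nonneg (by norm_num)
  rcases Nat.eq_zero_or_pos n with hn0 | hn
  · subst hn0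
    have h1 : errProb P Q π false + errProb P Q π true = 1 := by
      unfold errProb
      rw [Fintype.sum_unique, Fintype.sum_unique, Fintype.sum_unique, Fintype.sum_unique]
      have hpd : ∀ (X W : Type) , True := fun _ _ => trivial
      simp only [prodDist, Finset.univ_eq_empty, Finset.prod_empty, one_mul]
      cases h : π.dec default <;> simp [h]
    rw [h1, Real.log_one, neg_zero]
    simp only [Nat.cast_zero, zero_mul, mul_zero, Nat.mul_zero]
    rw [Real.sqrt_zero, zero_mul]
    linarith
  · -- main case
    have hPnn : ∀ b v, 0 ≤ P b v := fun b v => (hP b).1 v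
    obtain ⟨a, ha⟩ : ∃ a, UniqueArgmax
        (fun s => dC (prodDist P (π.x false)) (prodDist P (π.x true)) s) a := by
      rcases hopp with ⟨hg', -⟩ | ⟨hg', -⟩ <;>
        rcases hg' with ⟨m, hm, -⟩ | ⟨m, hm, -⟩ <;> exact ⟨m, hm⟩
    have hσI : sStar ∈ Set.Icc (0:ℝ) 1 := ⟨hsStar.1, by linarith [hsStar.2]⟩
    have hhb := opp_bound hsStar hhcc hPord hopp ha
    have hh0 : 0 ≤ dC (P false) (P true) sStar := dC_nonneg (hP false) (hP true) hσI
    have hfact : dC (prodDist P (π.x false)) (prodDist P (π.x true)) a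
        ≤ n * dC (P false) (P true) sStar :=
      dC_prod_le P hP hPsupp (π.x false) (π.x true) hh0 hhb.1 hhb.2
    -- derivative of the n-letter divergence at the maximizer
    have hsuppP : CommonSupport (prodDist P (π.x false)) (prodDist P (π.x true)) := by
      obtain ⟨v, hv1, hv2⟩ := hPsupp
      have hco : ∀ b : Bool, P b v ≠ 0 := fun b => by cases b <;> assumption
      refine ⟨fun _ => v, ?_, ?_⟩
      · show (∏ i, P (π.x false i) v) ≠ 0
        exact Finset.prod_ne_zero_iff.mpr fun i _ => hco _
      · show (∏ i, P (π.x true i) v) ≠ 0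
        exact Finset.prod_ne_zero_iff.mpr fun i _ => hco _
    have hCpos : 0 < cherSum (prodDist P (π.x false)) (prodDist P (π.x true)) a :=
      cherSum_pos (fun y => prodDist_nonneg hPnn _ y) (fun y => prodDist_nonneg hPnn _ y)
        hsuppP a
    obtain ⟨D, hgd⟩ : ∃ D, HasDerivAt
        (fun s => dC (prodDist P (π.x false)) (prodDist P (π.x true)) s) D a := by
      have hCd := hasDerivAt_cherSum (prodDist P (π.x false)) (prodDist P (π.x true))
        (fun y => prodDist_nonneg hPnn _ y) (fun y => prodDist_nonneg hPnn _ y) a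
      exact ⟨_, ((hCd.log (ne_of_gt hCpos)).neg).congr_of_eventuallyEq
        (Filter.Eventually.of_forall fun s => rfl)⟩
    have hsign := deriv_sign_of_max ha.1 (uam_le ha) hgd
    have hminb := min_sum_bound hn P hP hPsupp hpmin.1 hpm1 hpmin.2.2.1
      (π.x false) (π.x true) ha.1 hgd hsign.1 hsign.2
    have herr := err_ge_min P Q hP hQ π
    have hlow : (1/2) * Real.exp (-(dC (prodDist P (π.x false)) (prodDist P (π.x true)) a
        + Real.sqrt (2 * n) * (- Real.log pmin)))
        ≤ errProb P Q π false + errProb P Q π true := le_trans hminb herr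
    set X := dC (prodDist P (π.x false)) (prodDist P (π.x true)) a
      + Real.sqrt (2 * n) * (- Real.log pmin) with hX
    have hpos : (0:ℝ) < (1/2) * Real.exp (-X) := by positivity
    have hlog : -Real.log (errProb P Q π false + errProb P Q π true)
        ≤ -Real.log ((1/2) * Real.exp (-X)) :=
      neg_le_neg (Real.log_le_log hpos hlow)
    have hcomp : -Real.log ((1/2) * Real.exp (-X)) = X + Real.log 2 := by
      rw [Real.log_mul (by norm_num) (ne_of_gt (Real.exp_pos _)), Real.log_exp,
        show (1:ℝ)/2 = 2⁻¹ by norm_num, Real.log_inv]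
      ring
    rw [hcomp] at hlog
    rw [hLlog]
    have hsq0 : 0 ≤ Real.sqrt (2 * n) := Real.sqrt_nonneg _
    have := hfact
    rw [hX] at hlog
    linarith

end
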